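/- Let A, B be real symmetric n×n matrices with B positive definite, and let X̂, D̂ be real n×n matrices with D̂ diagonal. Set R = X̂ᵀ(AX̂ − BX̂D̂) and G = X̂ᵀBX̂ − I. If ‖G‖_∞ < 1, then BX̂ is invertible and componentwise |(BX̂)⁻¹(AX̂) − D̂|·e ≤ |R|·e + (‖R‖_∞ / (1 − ‖G‖_∞))·|G|·e. -/

import Mathlib

open Matrix

/-- Matrix infinity norm: maximum absolute row sum. -/
noncomputable def rowSumNorm {n : ℕ} (M : Matrix (Fin n) (Fin n) ℝ) : ℝ :=
  ⨆ i, ∑ j, |M i j|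

lemma rowSum_le_norm {n : ℕ} (M : Matrix (Fin n) (Fin n) ℝ) (i : Fin n) :
    ∑ j, |M i j| ≤ rowSumNorm M :=
  le_ciSup (f := fun i => ∑ j, |M i j|) (Set.Finite.bddAbove (Set.finite_range _)) i

lemma rowSumNorm_nonneg {n : ℕ} [Nonempty (Fin n)] (M : Matrix (Fin n) (Fin n) ℝ) :
    0 ≤ rowSumNorm M := by
  obtain ⟨i⟩ := (inferInstance : Nonempty (Fin n))
  exact le_trans (Finset.sum_nonneg fun j _ => abs_nonneg _) (rowSum_le_norm M i)

/-- Proposed verification bound: with `R = X̂ᵀ(AX̂ − BX̂D̂)` and `G = X̂ᵀBX̂ − I`,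
if `‖G‖_∞ < 1` then `BX̂` is invertible and componentwise
`|(BX̂)⁻¹(AX̂) − D̂)|·e ≤ |R|·e + (‖R‖_∞/(1 − ‖G‖_∞))·|G|·e`. -/
theorem stmt11 {n : ℕ} (A B Xh Dh : Matrix (Fin n) (Fin n) ℝ)
    (hA : A.IsSymm) (hB : B.PosDef) (d : Fin n → ℝ) (hD : Dh = Matrix.diagonal d)
    (R G : Matrix (Fin n) (Fin n) ℝ)
    (hR : R = Xhᵀ * (A * Xh - B * Xh * Dh))
    (hG : G = Xhᵀ * B * Xh - 1)
    (h : rowSumNorm G < 1) :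
    IsUnit (B * Xh) ∧
      ∀ i, (∑ j, |((B * Xh)⁻¹ * (A * Xh) - Dh) i j|) ≤
        (∑ j, |R i j|) +
          rowSumNorm R / (1 - rowSumNorm G) * (∑ j, |G i j|) := by
  rcases Nat.eq_zero_or_pos n with hn | hn
  · subst hn
    exact ⟨isUnit_of_subsingleton _, fun i => i.elim0⟩
  haveI : Nonempty (Fin n) := Fin.pos_iff_nonempty.mp hn
  -- invertibility of 1 + G
  have hdet1G : (1 + G).det ≠ 0 := by
    intro h0
    obtain ⟨v, hv, hmv⟩ := Matrix.exists_mulVec_eq_zero_iff.mpr h0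
    obtain ⟨i, hi⟩ := Finite.exists_max (fun i => |v i|)
    have hvi : 0 < |v i| := by
      obtain ⟨k, hk⟩ : ∃ k, v k ≠ 0 := Function.ne_iff.mp hv
      exact lt_of_lt_of_le (abs_pos.mpr hk) (hi k)
    have hveq : v + G *ᵥ v = 0 := by
      have e1 : (1 + G) *ᵥ v = v + G *ᵥ v := by
        rw [Matrix.add_mulVec, Matrix.one_mulVec]
      rw [e1] at hmv; exact hmv
    have hvi' : v i = -((G *ᵥ v) i) := by
      have := congrFun hveq i
      simp only [Pi.add_apply, Pi.zero_apply] at this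
      linarith
    have hb : |v i| ≤ rowSumNorm G * |v i| := by
      calc |v i| = |(G *ᵥ v) i| := by rw [hvi', abs_neg]
        _ ≤ ∑ j, |G i j * v j| := by
            simpa [Matrix.mulVec, dotProduct] using
              Finset.abs_sum_le_sum_abs (fun j => G i j * v j) Finset.univ
        _ ≤ ∑ j, |G i j| * |v i| := by
            refine Finset.sum_le_sum fun j _ => ?_
            rw [abs_mul]
            exact mul_le_mul_of_nonneg_left (hi j) (abs_nonneg _)
        _ = (∑ j, |G i j|) * |v i| := by rw [Finset.sum_mul]
        _ ≤ rowSumNorm G * |v i| :=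
            mul_le_mul_of_nonneg_right (rowSum_le_norm G i) (le_of_lt hvi)
    nlinarith
  have hXBX : Xhᵀ * B * Xh = 1 + G := by rw [hG]; abel
  have hdetBX : (B * Xh).det ≠ 0 := by
    have h1 : (Xhᵀ * B * Xh).det ≠ 0 := by rw [hXBX]; exact hdet1G
    rw [Matrix.det_mul, Matrix.det_mul] at h1
    rw [Matrix.det_mul]
    intro h2
    apply h1
    rcases mul_eq_zero.mp h2 with hb | hx
    · rw [hb]; ring
    · rw [hx]; ring
  refine ⟨(Matrix.isUnit_iff_isUnit_det _).mpr (isUnit_iff_ne_zero.mpr hdetBX), ?_⟩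
  set E := (B * Xh)⁻¹ * (A * Xh) - Dh with hEdef
  have hinv : (B * Xh) * (B * Xh)⁻¹ = 1 := Matrix.mul_nonsing_inv _ (isUnit_iff_ne_zero.mpr hdetBX)
  have hE : E = R - G * E := by
    have key : (1 + G) * E = R := by
      rw [← hXBX, hEdef, hR]
      calc Xhᵀ * B * Xh * ((B * Xh)⁻¹ * (A * Xh) - Dh)
          = Xhᵀ * ((B * Xh) * (B * Xh)⁻¹) * (A * Xh) - Xhᵀ * (B * Xh * Dh) := by
            noncomm_ring
        _ = Xhᵀ * (A * Xh - B * Xh * Dh) := by rw [hinv]; noncomm_ring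
    have : E + G * E = R := by rw [← key]; noncomm_ring
    exact eq_sub_iff_add_eq.mpr this
  set N := rowSumNorm E with hNdef
  set K := rowSumNorm G
  set rR := rowSumNorm R
  have hNnn : 0 ≤ N := rowSumNorm_nonneg E
  have hKnn : 0 ≤ K := rowSumNorm_nonneg G
  have hGE : ∀ i, ∑ j, |(G * E) i j| ≤ (∑ k, |G i k|) * N := by
    intro i
    calc ∑ j, |(G * E) i j| ≤ ∑ j, ∑ k, |G i k| * |E k j| := by
          refine Finset.sum_le_sum fun j _ => ?_
          rw [Matrix.mul_apply]
          refine le_trans (Finset.abs_sum_le_sum_abs _ _) ?_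
          exact le_of_eq (Finset.sum_congr rfl fun k _ => abs_mul _ _)
      _ = ∑ k, |G i k| * ∑ j, |E k j| := by
          rw [Finset.sum_comm]
          exact Finset.sum_congr rfl fun k _ => (Finset.mul_sum _ _ _).symm
      _ ≤ ∑ k, |G i k| * N :=
          Finset.sum_le_sum fun k _ =>
            mul_le_mul_of_nonneg_left (rowSum_le_norm E k) (abs_nonneg _)
      _ = (∑ k, |G i k|) * N := (Finset.sum_mul _ _ _).symm
  have hrow : ∀ i, ∑ j, |E i j| ≤ (∑ j, |R i j|) + (∑ j, |G i j|) * N := by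
    intro i
    calc ∑ j, |E i j| = ∑ j, |R i j - (G * E) i j| := by
          refine Finset.sum_congr rfl fun j _ => ?_
          have := congrFun (congrFun hE i) j
          simp only [Matrix.sub_apply] at this
          rw [this]
      _ ≤ ∑ j, (|R i j| + |(G * E) i j|) :=
          Finset.sum_le_sum fun j _ => abs_sub (R i j) ((G * E) i j)
      _ = (∑ j, |R i j|) + ∑ j, |(G * E) i j| := Finset.sum_add_distrib
      _ ≤ (∑ j, |R i j|) + (∑ j, |G i j|) * N := by
          exact add_le_add_right (hGE i) _
  have hN : N ≤ rR + K * N := by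
    refine ciSup_le fun i => ?_
    refine le_trans (hrow i) (add_le_add (rowSum_le_norm R i) ?_)
    exact mul_le_mul_of_nonneg_right (rowSum_le_norm G i) hNnn
  have hK1 : 0 < 1 - K := by linarith
  have hNfin : N ≤ rR / (1 - K) := by
    rw [le_div_iff₀ hK1]
    nlinarith
  intro i
  refine le_trans (hrow i) (add_le_add_right ?_ _)
  exact (mul_le_mul_of_nonneg_left hNfin
    (Finset.sum_nonneg fun j _ => abs_nonneg _)).trans_eq (mul_comm _ _)
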